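/- If T is a tree with n vertices, then tmc(T) = l(T) + 1, where l(T) is the number of leaves of T (equivalently, tmc(T) = m − n + 2 + l(T) with m = n − 1). -/

import Mathlib

open SimpleGraph

/-- A walk in a total-colored graph is *total monochromatic* if all of its edges and
internal vertices have the same color. -/
def IsTotalMonoWalk {V : Type*} {G : SimpleGraph V} (ce : Sym2 V → ℕ) (cv : V → ℕ)
    {u v : V} (w : G.Walk u v) : Prop :=
  ∃ c, (∀ e ∈ w.edges, ce e = c) ∧ ∀ x ∈ w.support.tail.dropLast, cv x = c

/-- A total coloring (edge coloring `ce`, vertex coloring `cv`) of `G` is a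
*TMC-coloring* if any two vertices are connected by a total monochromatic path. -/
def IsTMCColoring {V : Type*} (G : SimpleGraph V) (ce : Sym2 V → ℕ) (cv : V → ℕ) : Prop :=
  ∀ u v : V, u ≠ v → ∃ w : G.Walk u v, w.IsPath ∧ IsTotalMonoWalk ce cv w

/-- The number of colors used by a total coloring of `G`:
colors appearing on edges of `G` together with colors appearing on vertices. -/
noncomputable def colorsUsed {V : Type*} (G : SimpleGraph V) (ce : Sym2 V → ℕ) (cv : V → ℕ) : ℕ :=
  (ce '' G.edgeSet ∪ Set.range cv).ncard

/-- The total monochromatic connection number `tmc G`: the maximum number of colors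
used in a TMC-coloring of `G`. -/
noncomputable def tmc {V : Type*} [Fintype V] (G : SimpleGraph V) : ℕ :=
  sSup {k | ∃ ce cv, IsTMCColoring G ce cv ∧ colorsUsed G ce cv = k}

/-- The number of leaves (vertices of degree one) of a graph. -/
noncomputable def numLeaves {V : Type*} (T : SimpleGraph V) : ℕ :=
  {v : V | (T.neighborSet v).ncard = 1}.ncard

/-- `maxLeaves G` is the maximum number of leaves over all spanning trees of `G`. -/
noncomputable def maxLeaves {V : Type*} [Fintype V] (G : SimpleGraph V) : ℕ :=
  sSup {k | ∃ T : SimpleGraph V, T ≤ G ∧ T.IsTree ∧ numLeaves T = k}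

section Aux

variable {V : Type*} {G : SimpleGraph V}

/-- Internal vertices of a path have two distinct neighbors. -/
lemma internal_two_nbrs {u v : V} (w : G.Walk u v) (hw : w.IsPath)
    {x : V} (hx : x ∈ w.support.tail.dropLast) :
    ∃ a b, a ≠ b ∧ G.Adj x a ∧ G.Adj x b := by
  induction w with
  | nil => simp at hx
  | @cons u b v h p ih =>
    rw [Walk.support_cons, List.tail_cons] at hx
    cases p with
    | nil => simp at hx
    | @cons b c v h2 p2 =>
      rw [Walk.support_cons, List.dropLast_cons_of_ne_nil (Walk.support_ne_nil p2)] at hx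
      rcases List.mem_cons.1 hx with rfl | hx2
      · refine ⟨u, c, ?_, h.symm, h2⟩
        rintro rfl
        exact (Walk.cons_isPath_iff _ _ |>.1 hw).2
          (by rw [Walk.support_cons]; exact List.mem_cons_of_mem _ (Walk.start_mem_support p2))
      · exact ih (Walk.cons_isPath_iff _ _ |>.1 hw).1
          (by rw [Walk.support_cons, List.tail_cons]; exact hx2)

/-- In a tree, every path between distinct vertices is total monochromatic
for any TMC-coloring. -/
lemma path_tm (hT : G.IsTree) {ce : Sym2 V → ℕ} {cv : V → ℕ}
    (h : IsTMCColoring G ce cv) {u v : V} (huv : u ≠ v)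
    (w : G.Walk u v) (hw : w.IsPath) : IsTotalMonoWalk ce cv w := by
  obtain ⟨p, hp, htm⟩ := h u v huv
  have heq : (⟨w, hw⟩ : G.Path u v) = ⟨p, hp⟩ := hT.IsAcyclic.path_unique _ _
  have : w = p := congrArg Subtype.val heq
  rwa [this]

lemma cherry (hT : G.IsTree) {ce : Sym2 V → ℕ} {cv : V → ℕ}
    (h : IsTMCColoring G ce cv) {u v w : V} (h1 : G.Adj u v) (h2 : G.Adj v w)
    (huw : u ≠ w) : ce s(u,v) = cv v ∧ ce s(v,w) = cv v := by
  have hp : (Walk.cons h1 (Walk.cons h2 Walk.nil)).IsPath := by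
    simp [Walk.isPath_def, h1.ne, h2.ne, huw]
  obtain ⟨c, hce, hcv⟩ := path_tm hT h huw _ hp
  have hv : cv v = c := by
    apply hcv; simp
  constructor
  · rw [hv]; apply hce; simp
  · rw [hv]; apply hce; simp

lemma edges_at_vertex (hT : G.IsTree) {ce : Sym2 V → ℕ} {cv : V → ℕ}
    (h : IsTMCColoring G ce cv) {v a b : V} (h1 : G.Adj v a) (h2 : G.Adj v b) :
    ce s(v,a) = ce s(v,b) := by
  rcases eq_or_ne a b with rfl | hab
  · rfl
  · have := cherry hT h h1.symm h2 hab
    rw [Sym2.eq_swap] at this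
    rw [this.1, this.2]

lemma edge_color_eq_walk (hT : G.IsTree) {ce : Sym2 V → ℕ} {cv : V → ℕ}
    (h : IsTMCColoring G ce cv) :
    ∀ {a x : V} (_ : G.Walk a x) {b y : V}, G.Adj a b → G.Adj x y →
      ce s(a,b) = ce s(x,y) := by
  intro a x w
  induction w with
  | nil => intro b y h1 h2; exact edges_at_vertex hT h h1 h2
  | @cons a c x hac p ih =>
    intro b y h1 h2
    rw [edges_at_vertex hT h h1 hac, Sym2.eq_swap]
    exact ih hac.symm h2

end Aux

lemma tmc_upper {V : Type*} [Fintype V] {T : SimpleGraph V} (hT : T.IsTree)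
    {ce : Sym2 V → ℕ} {cv : V → ℕ} (hc : IsTMCColoring T ce cv) :
    colorsUsed T ce cv ≤ numLeaves T + 1 := by
  classical
  set L : Set V := {v : V | (T.neighborSet v).ncard = 1} with hLdef
  by_cases hE : ∃ a b : V, T.Adj a b
  · obtain ⟨a0, b0, hab0⟩ := hE
    set c := ce s(a0, b0) with hcdef
    have hedge : ∀ e ∈ T.edgeSet, ce e = c := by
      intro e he
      induction e using Sym2.ind with
      | _ x y =>
        rw [SimpleGraph.mem_edgeSet] at he
        obtain ⟨w⟩ := hT.isConnected.preconnected x a0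
        exact edge_color_eq_walk hT hc w he hab0
    have hvert : ∀ v : V, v ∉ L → cv v = c := by
      intro v hv
      have hnb : (T.neighborSet v).Nonempty := by
        rcases eq_or_ne v a0 with rfl | hva
        · exact ⟨b0, hab0⟩
        · obtain ⟨w⟩ := hT.isConnected.preconnected v a0
          cases w with
          | nil => exact absurd rfl hva
          | cons h p => exact ⟨_, h⟩
      have h1 : 0 < (T.neighborSet v).ncard :=
        (Set.ncard_pos (Set.toFinite _)).2 hnb
      have h2 : 1 < (T.neighborSet v).ncard := lt_of_le_of_ne h1 (Ne.symm hv)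
      obtain ⟨x, hx, y, hy, hxy⟩ := (Set.one_lt_ncard (Set.toFinite _)).1 h2
      have hch := cherry hT hc (G := T) hx.symm hy hxy
      rw [← hch.2, hedge _ hy]
    have hsub : ce '' T.edgeSet ∪ Set.range cv ⊆ insert c (cv '' L) := by
      rintro k (⟨e, he, rfl⟩ | ⟨v, rfl⟩)
      · rw [hedge e he]; exact Set.mem_insert _ _
      · by_cases hv : v ∈ L
        · exact Set.mem_insert_of_mem _ ⟨v, hv, rfl⟩
        · rw [hvert v hv]; exact Set.mem_insert _ _
    calc colorsUsed T ce cv ≤ (insert c (cv '' L)).ncard :=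
          Set.ncard_le_ncard hsub (Set.toFinite _)
      _ ≤ (cv '' L).ncard + 1 := Set.ncard_insert_le _ _
      _ ≤ numLeaves T + 1 := Nat.add_le_add_right (Set.ncard_image_le (Set.toFinite _)) 1
  · push_neg at hE
    have hne : Nonempty V := hT.isConnected.nonempty
    have hVsub : ∀ u v : V, u = v := by
      intro u v
      by_contra hnuv
      obtain ⟨w⟩ := hT.isConnected.preconnected u v
      cases w with
      | nil => exact hnuv rfl
      | cons h p => exact hE _ _ h
    have hEe : ce '' T.edgeSet = ∅ := by
      rw [Set.image_eq_empty, Set.eq_empty_iff_forall_notMem]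
      intro e
      induction e using Sym2.ind with
      | _ x y => exact fun hh => hE x y ((SimpleGraph.mem_edgeSet _).1 hh)
    have hr : Set.range cv ⊆ {cv (Classical.arbitrary V)} := by
      rintro k ⟨v, rfl⟩
      rw [hVsub v (Classical.arbitrary V)]
      exact Set.mem_singleton _
    have : colorsUsed T ce cv ≤ 1 := by
      rw [colorsUsed, hEe, Set.empty_union]
      calc (Set.range cv).ncard ≤ ({cv (Classical.arbitrary V)} : Set ℕ).ncard :=
            Set.ncard_le_ncard hr (Set.finite_singleton _)
        _ = 1 := Set.ncard_singleton _
    exact le_trans this (Nat.le_add_left 1 _)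

lemma tmc_lower {V : Type*} [Fintype V] {T : SimpleGraph V} (hT : T.IsTree) :
    ∃ ce cv, IsTMCColoring T ce cv ∧ colorsUsed T ce cv = numLeaves T + 1 := by
  classical
  obtain ⟨f, hf⟩ := exists_injective_nat V
  set L : Set V := {v : V | (T.neighborSet v).ncard = 1} with hLdef
  set cv : V → ℕ := fun v => if v ∈ L then f v + 1 else 0 with hcvdef
  set ce : Sym2 V → ℕ := fun _ => 0 with hcedef
  refine ⟨ce, cv, ?_, ?_⟩
  · intro u v huv
    obtain ⟨w⟩ := hT.isConnected.preconnected u v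
    refine ⟨w.toPath.1, w.toPath.2, 0, fun e _ => rfl, ?_⟩
    intro x hx
    obtain ⟨a, b, hab, ha, hb⟩ := internal_two_nbrs w.toPath.1 w.toPath.2 hx
    have h2 : 1 < (T.neighborSet x).ncard :=
      (Set.one_lt_ncard (Set.toFinite _)).2 ⟨a, ha, b, hb, hab⟩
    have hxL : x ∉ L := by
      intro hxL
      rw [hLdef, Set.mem_setOf_eq] at hxL
      omega
    simp only [hcvdef, if_neg hxL]
  · have h0L : (0:ℕ) ∉ cv '' L := by
      rintro ⟨v, hv, hv0⟩
      simp only [hcvdef, if_pos hv] at hv0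
      exact Nat.succ_ne_zero _ hv0
    have hset : ce '' T.edgeSet ∪ Set.range cv = insert 0 (cv '' L) := by
      apply Set.Subset.antisymm
      · rintro k (⟨e, _, rfl⟩ | ⟨v, rfl⟩)
        · exact Set.mem_insert _ _
        · by_cases hv : v ∈ L
          · exact Set.mem_insert_of_mem _ ⟨v, hv, rfl⟩
          · simp only [hcvdef, if_neg hv]; exact Set.mem_insert _ _
      · rintro k (rfl | ⟨v, hv, rfl⟩)
        · by_cases hall : ∃ v : V, v ∉ L
          · obtain ⟨v, hv⟩ := hall
            exact Set.mem_union_right _ ⟨v, by simp only [hcvdef, if_neg hv]⟩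
          · push_neg at hall
            have hne : Nonempty V := hT.isConnected.nonempty
            set v0 := Classical.arbitrary V
            have hv0 : (T.neighborSet v0).ncard = 1 := hall v0
            have hnb : (T.neighborSet v0).Nonempty := by
              rw [← Set.ncard_pos (Set.toFinite _)]
              omega
            obtain ⟨u, hu⟩ := hnb
            exact Set.mem_union_left _ ⟨s(v0, u), (SimpleGraph.mem_edgeSet _).2 hu, rfl⟩
        · exact Set.mem_union_right _ ⟨v, rfl⟩
    have hinj : Set.InjOn cv L := by
      intro a ha b hb hab
      simp only [hcvdef, if_pos ha, if_pos hb] at hab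
      exact hf (Nat.succ_injective hab)
    rw [colorsUsed, hset, Set.ncard_insert_of_notMem h0L (Set.toFinite _),
      Set.ncard_image_of_injOn hinj]
    rfl

theorem stmt2 {V : Type*} [Fintype V] (T : SimpleGraph V) (hT : T.IsTree) :
    tmc T = numLeaves T + 1 := by
  have hmem : numLeaves T + 1 ∈
      {k | ∃ ce cv, IsTMCColoring T ce cv ∧ colorsUsed T ce cv = k} := tmc_lower hT
  have hub : ∀ k ∈ {k | ∃ ce cv, IsTMCColoring T ce cv ∧ colorsUsed T ce cv = k},
      k ≤ numLeaves T + 1 := by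
    rintro k ⟨ce, cv, h1, rfl⟩
    exact tmc_upper hT h1
  exact le_antisymm (csSup_le ⟨_, hmem⟩ hub) (le_csSup ⟨numLeaves T + 1, hub⟩ hmem)
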